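/- For a two-qubit density matrix ρ_AB with ordered eigenvalues λ₁ ≥ λ₂ ≥ λ₃ ≥ λ₄ and reduced states with minimal eigenvalues λ_A, λ_B, one has |λ_A − λ_B| ≤ min(λ₁ − λ₃, λ₂ − λ₄). -/

import Mathlib

open Matrix ComplexOrder

/-- Classical relative entropy with convention `0 * log 0 = 0` (automatic since
`Real.log 0 = 0`). -/
noncomputable def relEnt {d : ℕ} (p q : Fin d → ℝ) : ℝ :=
  ∑ i, p i * (Real.log (p i) - Real.log (q i))

/-- Non-decreasing rearrangement `p↑`. -/
noncomputable def sortAsc {d : ℕ} (p : Fin d → ℝ) : Fin d → ℝ :=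
  p ∘ Tuple.sort p

/-- Non-increasing rearrangement `p↓`. -/
noncomputable def sortDesc {d : ℕ} (p : Fin d → ℝ) : Fin d → ℝ :=
  (p ∘ Tuple.sort p) ∘ Fin.rev
/-- Matrix logarithm of a Hermitian matrix via its spectral decomposition
(junk value `0` on non-Hermitian matrices). -/
noncomputable def matLog {n : Type*} [Fintype n] [DecidableEq n]
    (A : Matrix n n ℂ) : Matrix n n ℂ :=
  if h : A.IsHermitian then
    (h.eigenvectorUnitary : Matrix n n ℂ) *
      Matrix.diagonal (fun i => (Real.log (h.eigenvalues i) : ℂ)) *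
      (star h.eigenvectorUnitary : Matrix n n ℂ)
  else 0

/-- Eigenvalue vector of a Hermitian matrix (junk value `0` otherwise). -/
noncomputable def evals {n : Type*} [Fintype n] [DecidableEq n]
    (A : Matrix n n ℂ) : n → ℝ :=
  if h : A.IsHermitian then h.eigenvalues else 0

/-- Quantum relative entropy `S(ρ‖σ) = Tr (ρ (log ρ − log σ))`. -/
noncomputable def qRelEnt {n : Type*} [Fintype n] [DecidableEq n]
    (ρ σ : Matrix n n ℂ) : ℝ :=
  ((ρ * (matLog ρ - matLog σ)).trace).re

/-- von Neumann entropy `S(ρ) = −Tr (ρ log ρ)`. -/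
noncomputable def vnEnt {n : Type*} [Fintype n] [DecidableEq n]
    (ρ : Matrix n n ℂ) : ℝ :=
  -((ρ * matLog ρ).trace).re

/-- Partial trace over the second (B) factor. -/
noncomputable def ptraceB {a b : ℕ}
    (ρ : Matrix (Fin a × Fin b) (Fin a × Fin b) ℂ) : Matrix (Fin a) (Fin a) ℂ :=
  fun i j => ∑ k, ρ (i, k) (j, k)

/-- Partial trace over the first (A) factor. -/
noncomputable def ptraceA {a b : ℕ}
    (ρ : Matrix (Fin a × Fin b) (Fin a × Fin b) ℂ) : Matrix (Fin b) (Fin b) ℂ :=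
  fun i j => ∑ k, ρ (k, i) (k, j)

/-- Eigenvalues of a matrix on a bipartite space, reindexed by `Fin (a*b)`. -/
noncomputable def evalsP {a b : ℕ}
    (ρ : Matrix (Fin a × Fin b) (Fin a × Fin b) ℂ) : Fin (a * b) → ℝ :=
  evals ρ ∘ finProdFinEquiv.symm

namespace Aux

/-! ### tensor / perp on `Fin 2` -/

noncomputable def tp (φ ψ : Fin 2 → ℂ) : Fin 2 × Fin 2 → ℂ := fun p => φ p.1 * ψ p.2

noncomputable def perp (φ : Fin 2 → ℂ) : Fin 2 → ℂ :=
  ![-(starRingEnd ℂ) (φ 1), (starRingEnd ℂ) (φ 0)]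

noncomputable def nsq {n : Type*} [Fintype n] (x : n → ℂ) : ℝ := ∑ i, Complex.normSq (x i)

lemma nsq_perp (φ : Fin 2 → ℂ) : nsq (perp φ) = nsq φ := by
  simp [nsq, perp, Fin.sum_univ_two, Complex.normSq_conj]
  ring

lemma nsq_tp (φ ψ : Fin 2 → ℂ) : nsq (tp φ ψ) = nsq φ * nsq ψ := by
  simp [nsq, tp, Fintype.sum_prod_type, Fin.sum_univ_two, Complex.normSq_mul]
  ring

lemma solve_lin (c : Fin 2 → ℂ) : ∃ φ : Fin 2 → ℂ, nsq φ = 1 ∧ φ 0 * c 0 + φ 1 * c 1 = 0 := by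
  rcases eq_or_ne (Complex.normSq (c 0) + Complex.normSq (c 1)) 0 with hr | hr
  · have h0 : c 0 = 0 := by
      have := Complex.normSq_nonneg (c 0); have := Complex.normSq_nonneg (c 1)
      have : Complex.normSq (c 0) = 0 := by linarith
      exact Complex.normSq_eq_zero.mp this
    refine ⟨![1, 0], by simp [nsq, Fin.sum_univ_two], by simp [h0]⟩
  · set r := Complex.normSq (c 0) + Complex.normSq (c 1) with hrdef
    have hrpos : 0 < r := lt_of_le_of_ne
      (add_nonneg (Complex.normSq_nonneg _) (Complex.normSq_nonneg _)) (Ne.symm hr)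
    set s : ℝ := Real.sqrt r with hs
    refine ⟨![c 1 / (s : ℂ), -(c 0 / (s : ℂ))], ?_, ?_⟩
    · simp only [nsq, Fin.sum_univ_two, Matrix.cons_val_zero, Matrix.cons_val_one,
        Matrix.head_cons, Complex.normSq_neg, Complex.normSq_div, Complex.normSq_ofReal]
      have hss : s * s = r := Real.mul_self_sqrt hrpos.le
      rw [hss, ← add_div, add_comm, ← hrdef, div_self (ne_of_gt hrpos)]
    · simp only [Matrix.cons_val_zero, Matrix.cons_val_one, Matrix.head_cons]
      ring

/-! ### quadratic form machinery -/

variable {n : Type*} [Fintype n] [DecidableEq n]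

lemma nsq_nonneg (x : n → ℂ) : 0 ≤ nsq x :=
  Finset.sum_nonneg fun i _ => Complex.normSq_nonneg _

lemma dot_self (x : n → ℂ) : star x ⬝ᵥ x = ((nsq x : ℝ) : ℂ) := by
  simp only [dotProduct, nsq, Pi.star_apply, Complex.ofReal_sum]
  refine Finset.sum_congr rfl fun i _ => ?_
  rw [Complex.normSq_eq_conj_mul_self, Complex.star_def]

lemma qc_expand {A : Matrix n n ℂ} (h : A.IsHermitian) (x : n → ℂ) :
    star x ⬝ᵥ A *ᵥ x =
      ∑ i, (h.eigenvalues i : ℂ) *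
        (Complex.normSq (((star h.eigenvectorUnitary : Matrix n n ℂ) *ᵥ x) i) : ℂ) := by
  set U : Matrix n n ℂ := (h.eigenvectorUnitary : Matrix n n ℂ) with hU
  have hsp := h.spectral_theorem
  rw [Unitary.conjStarAlgAut_apply] at hsp
  conv_lhs => rw [hsp]
  set y : n → ℂ := (star U) *ᵥ x with hy
  have h1 : (U * diagonal (RCLike.ofReal ∘ h.eigenvalues) * star U) *ᵥ x
      = U *ᵥ (diagonal (RCLike.ofReal ∘ h.eigenvalues) *ᵥ y) := by
    rw [hy, ← mulVec_mulVec, ← mulVec_mulVec]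
  have h2 : star x ᵥ* U = star y := by
    rw [hy, star_mulVec, ← star_eq_conjTranspose, star_star]
  rw [h1, dotProduct_mulVec, h2]
  simp only [dotProduct, mulVec_diagonal, Pi.star_apply, Function.comp_apply]
  refine Finset.sum_congr rfl fun i _ => ?_
  rw [Complex.normSq_eq_conj_mul_self, Complex.star_def]
  exact mul_left_comm ((starRingEnd ℂ) (y i)) ((h.eigenvalues i : ℂ)) (y i)

lemma nsq_star_mulVec {A : Matrix n n ℂ} (h : A.IsHermitian) (x : n → ℂ) :
    nsq ((star h.eigenvectorUnitary : Matrix n n ℂ) *ᵥ x) = nsq x := by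
  set U : Matrix n n ℂ := (h.eigenvectorUnitary : Matrix n n ℂ) with hU
  set y : n → ℂ := (star U) *ᵥ x with hy
  have key : star y ⬝ᵥ y = star x ⬝ᵥ x := by
    have h2 : star y = star x ᵥ* U := by
      rw [hy, star_mulVec, ← star_eq_conjTranspose, star_star]
    rw [h2, hy, ← dotProduct_mulVec, mulVec_mulVec,
      (Matrix.mem_unitaryGroup_iff).mp h.eigenvectorUnitary.2, one_mulVec]
  rw [dot_self, dot_self] at key
  exact_mod_cast key

lemma qre_expand {A : Matrix n n ℂ} (h : A.IsHermitian) (x : n → ℂ) :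
    (star x ⬝ᵥ A *ᵥ x).re =
      ∑ i, h.eigenvalues i *
        Complex.normSq (((star h.eigenvectorUnitary : Matrix n n ℂ) *ᵥ x) i) := by
  rw [qc_expand h x]
  norm_cast

lemma q_le_of_bound {A : Matrix n n ℂ} (h : A.IsHermitian) {c : ℝ}
    (hc : ∀ i, h.eigenvalues i ≤ c) {x : n → ℂ} (hx : nsq x = 1) :
    (star x ⬝ᵥ A *ᵥ x).re ≤ c := by
  rw [qre_expand h x]
  set y := (star h.eigenvectorUnitary : Matrix n n ℂ) *ᵥ x with hy
  calc ∑ i, h.eigenvalues i * Complex.normSq (y i)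
      ≤ ∑ i, c * Complex.normSq (y i) :=
        Finset.sum_le_sum fun i _ =>
          mul_le_mul_of_nonneg_right (hc i) (Complex.normSq_nonneg _)
    _ = c * nsq y := by rw [nsq, Finset.mul_sum]
    _ = c := by rw [hy, nsq_star_mulVec h, hx, mul_one]

lemma le_q_of_bound {A : Matrix n n ℂ} (h : A.IsHermitian) {c : ℝ}
    (hc : ∀ i, c ≤ h.eigenvalues i) {x : n → ℂ} (hx : nsq x = 1) :
    c ≤ (star x ⬝ᵥ A *ᵥ x).re := by
  rw [qre_expand h x]
  set y := (star h.eigenvectorUnitary : Matrix n n ℂ) *ᵥ x with hy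
  calc c = c * nsq y := by rw [hy, nsq_star_mulVec h, hx, mul_one]
    _ = ∑ i, c * Complex.normSq (y i) := by rw [nsq, Finset.mul_sum]
    _ ≤ ∑ i, h.eigenvalues i * Complex.normSq (y i) :=
        Finset.sum_le_sum fun i _ =>
          mul_le_mul_of_nonneg_right (hc i) (Complex.normSq_nonneg _)

lemma q_le_of_bound' {A : Matrix n n ℂ} (h : A.IsHermitian) {c : ℝ} (t : n)
    (hc : ∀ i, i ≠ t → h.eigenvalues i ≤ c) {x : n → ℂ} (hx : nsq x = 1)
    (hxt : ((star h.eigenvectorUnitary : Matrix n n ℂ) *ᵥ x) t = 0) :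
    (star x ⬝ᵥ A *ᵥ x).re ≤ c := by
  rw [qre_expand h x]
  set y := (star h.eigenvectorUnitary : Matrix n n ℂ) *ᵥ x with hy
  calc ∑ i, h.eigenvalues i * Complex.normSq (y i)
      ≤ ∑ i, c * Complex.normSq (y i) := by
        refine Finset.sum_le_sum fun i _ => ?_
        rcases eq_or_ne i t with rfl | hne
        · rw [hxt]; simp
        · exact mul_le_mul_of_nonneg_right (hc i hne) (Complex.normSq_nonneg _)
    _ = c * nsq y := by rw [nsq, Finset.mul_sum]
    _ = c := by rw [hy, nsq_star_mulVec h, hx, mul_one]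

lemma le_q_of_bound' {A : Matrix n n ℂ} (h : A.IsHermitian) {c : ℝ} (t : n)
    (hc : ∀ i, i ≠ t → c ≤ h.eigenvalues i) {x : n → ℂ} (hx : nsq x = 1)
    (hxt : ((star h.eigenvectorUnitary : Matrix n n ℂ) *ᵥ x) t = 0) :
    c ≤ (star x ⬝ᵥ A *ᵥ x).re := by
  rw [qre_expand h x]
  set y := (star h.eigenvectorUnitary : Matrix n n ℂ) *ᵥ x with hy
  calc c = c * nsq y := by rw [hy, nsq_star_mulVec h, hx, mul_one]
    _ = ∑ i, c * Complex.normSq (y i) := by rw [nsq, Finset.mul_sum]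
    _ ≤ ∑ i, h.eigenvalues i * Complex.normSq (y i) := by
        refine Finset.sum_le_sum fun i _ => ?_
        rcases eq_or_ne i t with rfl | hne
        · rw [hxt]; simp
        · exact mul_le_mul_of_nonneg_right (hc i hne) (Complex.normSq_nonneg _)

lemma exists_eigvec {A : Matrix n n ℂ} (h : A.IsHermitian) (t : n) :
    ∃ v : n → ℂ, nsq v = 1 ∧ (star v ⬝ᵥ A *ᵥ v).re = h.eigenvalues t := by
  have hnsq : nsq ⇑(h.eigenvectorBasis t) = 1 := by
    have hn : ‖h.eigenvectorBasis t‖ = 1 := h.eigenvectorBasis.orthonormal.1 t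
    have : nsq ⇑(h.eigenvectorBasis t) = ‖h.eigenvectorBasis t‖ ^ 2 := by
      rw [EuclideanSpace.norm_eq, Real.sq_sqrt (Finset.sum_nonneg fun i _ => sq_nonneg _)]
      unfold nsq
      refine Finset.sum_congr rfl fun i _ => ?_
      exact Complex.normSq_eq_norm_sq _
    rw [this, hn, one_pow]
  refine ⟨⇑(h.eigenvectorBasis t), hnsq, ?_⟩
  rw [h.mulVec_eigenvectorBasis, dotProduct_smul, dot_self, hnsq]
  simp

lemma star_mulVec_apply (U : Matrix n n ℂ) (x : n → ℂ) (t : n) :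
    ((star U) *ᵥ x) t = star (fun k => U k t) ⬝ᵥ x := by
  simp [mulVec, dotProduct, Matrix.star_apply]


section Tensor

variable (ρ : Matrix (Fin 2 × Fin 2) (Fin 2 × Fin 2) ℂ)

lemma T1c (φ ψ : Fin 2 → ℂ) :
    (star φ ⬝ᵥ ptraceB ρ *ᵥ φ) * (star (ψ 0) * ψ 0 + star (ψ 1) * ψ 1)
      = star (tp φ ψ) ⬝ᵥ ρ *ᵥ tp φ ψ
        + star (tp φ (perp ψ)) ⬝ᵥ ρ *ᵥ tp φ (perp ψ) := by
  simp only [dotProduct, mulVec, ptraceB, tp, perp, Fintype.sum_prod_type,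
    Fin.sum_univ_two, Pi.star_apply, star_mul', star_neg, star_star,
    Matrix.cons_val_zero, Matrix.cons_val_one, Matrix.head_cons, Complex.star_def,
    _root_.map_mul, map_neg, Complex.conj_conj, Finset.mul_sum, Finset.sum_mul]
  ring

lemma T2c (φ ψ : Fin 2 → ℂ) :
    (star ψ ⬝ᵥ ptraceA ρ *ᵥ ψ) * (star (φ 0) * φ 0 + star (φ 1) * φ 1)
      = star (tp φ ψ) ⬝ᵥ ρ *ᵥ tp φ ψ
        + star (tp (perp φ) ψ) ⬝ᵥ ρ *ᵥ tp (perp φ) ψ := by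
  simp only [dotProduct, mulVec, ptraceA, tp, perp, Fintype.sum_prod_type,
    Fin.sum_univ_two, Pi.star_apply, star_mul', star_neg, star_star,
    Matrix.cons_val_zero, Matrix.cons_val_one, Matrix.head_cons, Complex.star_def,
    _root_.map_mul, map_neg, Complex.conj_conj, Finset.mul_sum, Finset.sum_mul]
  ring

lemma norm_one_complex {ψ : Fin 2 → ℂ} (hψ : nsq ψ = 1) :
    star (ψ 0) * ψ 0 + star (ψ 1) * ψ 1 = 1 := by
  have := dot_self ψ
  rw [hψ] at this
  simpa [dotProduct, Fin.sum_univ_two] using this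

lemma T1re (φ ψ : Fin 2 → ℂ) (hψ : nsq ψ = 1) :
    (star φ ⬝ᵥ ptraceB ρ *ᵥ φ).re
      = (star (tp φ ψ) ⬝ᵥ ρ *ᵥ tp φ ψ).re
        + (star (tp φ (perp ψ)) ⬝ᵥ ρ *ᵥ tp φ (perp ψ)).re := by
  have := T1c ρ φ ψ
  rw [norm_one_complex hψ, mul_one] at this
  rw [this, Complex.add_re]

lemma T2re (φ ψ : Fin 2 → ℂ) (hφ : nsq φ = 1) :
    (star ψ ⬝ᵥ ptraceA ρ *ᵥ ψ).re
      = (star (tp φ ψ) ⬝ᵥ ρ *ᵥ tp φ ψ).re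
        + (star (tp (perp φ) ψ) ⬝ᵥ ρ *ᵥ tp (perp φ) ψ).re := by
  have := T2c ρ φ ψ
  rw [norm_one_complex hφ, mul_one] at this
  rw [this, Complex.add_re]

lemma herm_ptraceB {ρ : Matrix (Fin 2 × Fin 2) (Fin 2 × Fin 2) ℂ}
    (h : ρ.IsHermitian) : (ptraceB ρ).IsHermitian := by
  have he : ∀ p q, ρ p q = star (ρ q p) := fun p q => (Matrix.IsHermitian.apply h p q).symm
  ext i j
  simp only [conjTranspose_apply, ptraceB, star_sum]
  exact Finset.sum_congr rfl fun k _ => (he (i,k) (j,k)).symm ▸ rfl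

lemma herm_ptraceA {ρ : Matrix (Fin 2 × Fin 2) (Fin 2 × Fin 2) ℂ}
    (h : ρ.IsHermitian) : (ptraceA ρ).IsHermitian := by
  have he : ∀ p q, ρ p q = star (ρ q p) := fun p q => (Matrix.IsHermitian.apply h p q).symm
  ext i j
  simp only [conjTranspose_apply, ptraceA, star_sum]
  exact Finset.sum_congr rfl fun k _ => (he (k,i) (k,j)).symm ▸ rfl

lemma evals_eq {n : Type*} [Fintype n] [DecidableEq n] {M : Matrix n n ℂ}
    (h : M.IsHermitian) : evals M = h.eigenvalues := by
  rw [evals, dif_pos h]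

lemma min_le_rayleigh {M : Matrix (Fin 2) (Fin 2) ℂ} (h : M.IsHermitian)
    {φ : Fin 2 → ℂ} (hφ : nsq φ = 1) :
    min (evals M 0) (evals M 1) ≤ (star φ ⬝ᵥ M *ᵥ φ).re := by
  rw [evals_eq h]
  refine le_q_of_bound h (fun i => ?_) hφ
  fin_cases i
  · exact min_le_left _ _
  · exact min_le_right _ _

lemma exists_min_vec {M : Matrix (Fin 2) (Fin 2) ℂ} (h : M.IsHermitian) :
    ∃ ψ : Fin 2 → ℂ, nsq ψ = 1 ∧
      (star ψ ⬝ᵥ M *ᵥ ψ).re = min (evals M 0) (evals M 1) := by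
  rw [evals_eq h]
  rcases le_total (h.eigenvalues 0) (h.eigenvalues 1) with hle | hle
  · obtain ⟨v, hv1, hv2⟩ := exists_eigvec h 0
    exact ⟨v, hv1, by rw [hv2, min_eq_left hle]⟩
  · obtain ⟨v, hv1, hv2⟩ := exists_eigvec h 1
    exact ⟨v, hv1, by rw [hv2, min_eq_right hle]⟩

end Tensor

section Sorting

variable (p : Fin 4 → ℝ)

lemma sortDesc_apply (k : Fin 4) : sortDesc p k = p (Tuple.sort p (Fin.rev k)) := rfl

lemma comp_symm_apply (m : Fin 4) : p m = (p ∘ Tuple.sort p) ((Tuple.sort p).symm m) := by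
  simp

lemma le_sort0 (m : Fin 4) : p m ≤ sortDesc p 0 := by
  rw [sortDesc_apply, comp_symm_apply p m]
  exact Tuple.monotone_sort p ((by decide : ∀ j : Fin 4, j ≤ Fin.rev 0) _)

lemma sort3_le (m : Fin 4) : sortDesc p 3 ≤ p m := by
  rw [sortDesc_apply, comp_symm_apply p m]
  exact Tuple.monotone_sort p ((by decide : ∀ j : Fin 4, Fin.rev 3 ≤ j) _)

lemma sort_top : ∃ t : Fin 4, p t = sortDesc p 0 ∧
    ∀ m : Fin 4, m ≠ t → p m ≤ sortDesc p 1 := by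
  refine ⟨Tuple.sort p (Fin.rev 0), (sortDesc_apply p 0).symm, fun m hm => ?_⟩
  rw [sortDesc_apply, comp_symm_apply p m]
  refine Tuple.monotone_sort p ?_
  have hne : (Tuple.sort p).symm m ≠ Fin.rev 0 := fun hc => hm (by
    rw [← hc, Equiv.apply_symm_apply])
  revert hne
  exact (by decide : ∀ j : Fin 4, j ≠ Fin.rev 0 → j ≤ Fin.rev 1) _

lemma sort_bot : ∃ b : Fin 4, p b = sortDesc p 3 ∧
    ∀ m : Fin 4, m ≠ b → sortDesc p 2 ≤ p m := by
  refine ⟨Tuple.sort p (Fin.rev 3), (sortDesc_apply p 3).symm, fun m hm => ?_⟩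
  rw [sortDesc_apply, comp_symm_apply p m]
  refine Tuple.monotone_sort p ?_
  have hne : (Tuple.sort p).symm m ≠ Fin.rev 3 := fun hc => hm (by
    rw [← hc, Equiv.apply_symm_apply])
  revert hne
  exact (by decide : ∀ j : Fin 4, j ≠ Fin.rev 3 → Fin.rev 2 ≤ j) _

end Sorting

section Solve

lemma solve_fst (w : Fin 2 × Fin 2 → ℂ) (χ : Fin 2 → ℂ) :
    ∃ φ : Fin 2 → ℂ, nsq φ = 1 ∧ star w ⬝ᵥ tp φ χ = 0 := by
  obtain ⟨φ, h1, h2⟩ := solve_lin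
    ![star (w (0,0)) * χ 0 + star (w (0,1)) * χ 1,
      star (w (1,0)) * χ 0 + star (w (1,1)) * χ 1]
  refine ⟨φ, h1, ?_⟩
  simp only [Matrix.cons_val_zero, Matrix.cons_val_one, Matrix.head_cons] at h2
  simp only [dotProduct, tp, Fintype.sum_prod_type, Fin.sum_univ_two, Pi.star_apply]
  linear_combination h2

lemma solve_snd (w : Fin 2 × Fin 2 → ℂ) (χ : Fin 2 → ℂ) :
    ∃ ψ : Fin 2 → ℂ, nsq ψ = 1 ∧ star w ⬝ᵥ tp χ ψ = 0 := by
  obtain ⟨ψ, h1, h2⟩ := solve_lin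
    ![star (w (0,0)) * χ 0 + star (w (1,0)) * χ 1,
      star (w (0,1)) * χ 0 + star (w (1,1)) * χ 1]
  refine ⟨ψ, h1, ?_⟩
  simp only [Matrix.cons_val_zero, Matrix.cons_val_one, Matrix.head_cons] at h2
  simp only [dotProduct, tp, Fintype.sum_prod_type, Fin.sum_univ_two, Pi.star_apply]
  linear_combination h2

lemma perp_neg_perp (χ : Fin 2 → ℂ) : perp (-(perp χ)) = χ := by
  funext i
  fin_cases i <;> simp [perp]

lemma nsq_neg (χ : Fin 2 → ℂ) : nsq (-χ) = nsq χ := by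
  simp [nsq]

lemma solve_fst_perp (w : Fin 2 × Fin 2 → ℂ) (ψ : Fin 2 → ℂ) :
    ∃ φ : Fin 2 → ℂ, nsq φ = 1 ∧ star w ⬝ᵥ tp (perp φ) ψ = 0 := by
  obtain ⟨χ, h1, h2⟩ := solve_fst w ψ
  refine ⟨-(perp χ), ?_, ?_⟩
  · rw [nsq_neg, nsq_perp, h1]
  · rw [perp_neg_perp]; exact h2

lemma solve_snd_perp (w : Fin 2 × Fin 2 → ℂ) (φ : Fin 2 → ℂ) :
    ∃ ψ : Fin 2 → ℂ, nsq ψ = 1 ∧ star w ⬝ᵥ tp φ (perp ψ) = 0 := by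
  obtain ⟨χ, h1, h2⟩ := solve_snd w φ
  refine ⟨-(perp χ), ?_, ?_⟩
  · rw [nsq_neg, nsq_perp, h1]
  · rw [perp_neg_perp]; exact h2

end Solve

end Aux

open Aux in
theorem stmt_10 (ρ : Matrix (Fin 2 × Fin 2) (Fin 2 × Fin 2) ℂ)
    (hρ : ρ.PosSemidef) (hρ1 : ρ.trace = 1) :
    |min (evals (ptraceB ρ) 0) (evals (ptraceB ρ) 1) -
      min (evals (ptraceA ρ) 0) (evals (ptraceA ρ) 1)| ≤
      min (sortDesc (evalsP ρ) ⟨0, by norm_num⟩ - sortDesc (evalsP ρ) ⟨2, by norm_num⟩)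
        (sortDesc (evalsP ρ) ⟨1, by norm_num⟩ - sortDesc (evalsP ρ) ⟨3, by norm_num⟩) := by
  have h : ρ.IsHermitian := hρ.1
  have hA : (ptraceB ρ).IsHermitian := herm_ptraceB h
  have hB : (ptraceA ρ).IsHermitian := herm_ptraceA h
  set lA := min (evals (ptraceB ρ) 0) (evals (ptraceB ρ) 1) with hlA
  set lB := min (evals (ptraceA ρ) 0) (evals (ptraceA ρ) 1) with hlB
  set s : Fin 4 → ℝ := sortDesc (evalsP ρ) with hs
  have hev : ∀ j : Fin 2 × Fin 2, h.eigenvalues j = evalsP ρ (finProdFinEquiv j) := by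
    intro j
    rw [evalsP, Function.comp_apply, Equiv.symm_apply_apply, evals_eq h]
  -- global bounds
  have hub : ∀ j : Fin 2 × Fin 2, h.eigenvalues j ≤ s 0 := fun j => by
    rw [hev j]; exact le_sort0 _ _
  have hlb : ∀ j : Fin 2 × Fin 2, s 3 ≤ h.eigenvalues j := fun j => by
    rw [hev j]; exact sort3_le _ _
  obtain ⟨t, hts, ht1⟩ := sort_top (evalsP ρ)
  set t' : Fin 2 × Fin 2 := finProdFinEquiv.symm t with ht'
  have ht1' : ∀ j : Fin 2 × Fin 2, j ≠ t' → h.eigenvalues j ≤ s 1 := by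
    intro j hj
    rw [hev j]
    refine ht1 _ fun hc => hj ?_
    rw [ht', ← hc, Equiv.symm_apply_apply]
  obtain ⟨b, hbs, hb2⟩ := sort_bot (evalsP ρ)
  set b' : Fin 2 × Fin 2 := finProdFinEquiv.symm b with hb'
  have hb2' : ∀ j : Fin 2 × Fin 2, j ≠ b' → s 2 ≤ h.eigenvalues j := by
    intro j hj
    rw [hev j]
    refine hb2 _ fun hc => hj ?_
    rw [hb', ← hc, Equiv.symm_apply_apply]
  set U : Matrix (Fin 2 × Fin 2) (Fin 2 × Fin 2) ℂ :=
    (h.eigenvectorUnitary : Matrix (Fin 2 × Fin 2) (Fin 2 × Fin 2) ℂ) with hUdef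
  have key1 : lA - lB ≤ s 1 - s 3 := by
    obtain ⟨ψ, hψ, hψeq⟩ := exists_min_vec hB
    obtain ⟨φ, hφ, hor⟩ := solve_fst (fun k => U k t') (perp ψ)
    have e1 : lA ≤ (star φ ⬝ᵥ ptraceB ρ *ᵥ φ).re := min_le_rayleigh hA hφ
    have e2 := T1re ρ φ ψ hψ
    have e3 := T2re ρ φ ψ hφ
    have e4 : (star (tp φ (perp ψ)) ⬝ᵥ ρ *ᵥ tp φ (perp ψ)).re ≤ s 1 :=
      q_le_of_bound' h t' ht1'
        (by rw [nsq_tp, hφ, nsq_perp, hψ, mul_one])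
        (by rw [star_mulVec_apply]; exact hor)
    have e5 : s 3 ≤ (star (tp (perp φ) ψ) ⬝ᵥ ρ *ᵥ tp (perp φ) ψ).re :=
      le_q_of_bound h hlb (by rw [nsq_tp, nsq_perp, hφ, hψ, mul_one])
    rw [hψeq] at e3
    rw [← hlB] at e3
    linarith
  have key2 : lA - lB ≤ s 0 - s 2 := by
    obtain ⟨ψ, hψ, hψeq⟩ := exists_min_vec hB
    obtain ⟨φ, hφ, hor⟩ := solve_fst_perp (fun k => U k b') ψ
    have e1 : lA ≤ (star φ ⬝ᵥ ptraceB ρ *ᵥ φ).re := min_le_rayleigh hA hφ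
    have e2 := T1re ρ φ ψ hψ
    have e3 := T2re ρ φ ψ hφ
    have e4 : (star (tp φ (perp ψ)) ⬝ᵥ ρ *ᵥ tp φ (perp ψ)).re ≤ s 0 :=
      q_le_of_bound h hub (by rw [nsq_tp, hφ, nsq_perp, hψ, mul_one])
    have e5 : s 2 ≤ (star (tp (perp φ) ψ) ⬝ᵥ ρ *ᵥ tp (perp φ) ψ).re :=
      le_q_of_bound' h b' hb2'
        (by rw [nsq_tp, nsq_perp, hφ, hψ, mul_one])
        (by rw [star_mulVec_apply]; exact hor)
    rw [hψeq] at e3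
    rw [← hlB] at e3
    linarith
  have key3 : lB - lA ≤ s 1 - s 3 := by
    obtain ⟨φ, hφ, hφeq⟩ := exists_min_vec hA
    obtain ⟨ψ, hψ, hor⟩ := solve_snd (fun k => U k t') (perp φ)
    have e1 : lB ≤ (star ψ ⬝ᵥ ptraceA ρ *ᵥ ψ).re := min_le_rayleigh hB hψ
    have e2 := T2re ρ φ ψ hφ
    have e3 := T1re ρ φ ψ hψ
    have e4 : (star (tp (perp φ) ψ) ⬝ᵥ ρ *ᵥ tp (perp φ) ψ).re ≤ s 1 :=
      q_le_of_bound' h t' ht1'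
        (by rw [nsq_tp, nsq_perp, hφ, hψ, mul_one])
        (by rw [star_mulVec_apply]; exact hor)
    have e5 : s 3 ≤ (star (tp φ (perp ψ)) ⬝ᵥ ρ *ᵥ tp φ (perp ψ)).re :=
      le_q_of_bound h hlb (by rw [nsq_tp, hφ, nsq_perp, hψ, mul_one])
    rw [hφeq] at e3
    rw [← hlA] at e3
    linarith
  have key4 : lB - lA ≤ s 0 - s 2 := by
    obtain ⟨φ, hφ, hφeq⟩ := exists_min_vec hA
    obtain ⟨ψ, hψ, hor⟩ := solve_snd_perp (fun k => U k b') φ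
    have e1 : lB ≤ (star ψ ⬝ᵥ ptraceA ρ *ᵥ ψ).re := min_le_rayleigh hB hψ
    have e2 := T2re ρ φ ψ hφ
    have e3 := T1re ρ φ ψ hψ
    have e4 : (star (tp (perp φ) ψ) ⬝ᵥ ρ *ᵥ tp (perp φ) ψ).re ≤ s 0 :=
      q_le_of_bound h hub (by rw [nsq_tp, nsq_perp, hφ, hψ, mul_one])
    have e5 : s 2 ≤ (star (tp φ (perp ψ)) ⬝ᵥ ρ *ᵥ tp φ (perp ψ)).re :=
      le_q_of_bound' h b' hb2'
        (by rw [nsq_tp, hφ, nsq_perp, hψ, mul_one])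
        (by rw [star_mulVec_apply]; exact hor)
    rw [hφeq] at e3
    rw [← hlA] at e3
    linarith
  refine le_min (abs_sub_le_iff.mpr ⟨?_, ?_⟩) (abs_sub_le_iff.mpr ⟨?_, ?_⟩)
  · exact key2
  · exact key4
  · exact key1
  · exact key3
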